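/- Suppose f : ℝ → ℝ satisfies P_f(δ) ≠ ∅ for all δ ∈ ℝ. Then a proximal selection r_min of f is continuous on ℝ if and only if f is strictly 1-weakly convex (i.e., r ↦ f(r) + r²/2 is strictly convex). In that case P_f(δ) is a singleton for every δ and r_min is surjective onto ℝ. -/
import Mathlib

open Set Filter Topology

/-- Suppose `P_f(δ) ≠ ∅` for all `δ` and `rmin` is a proximal selection.
Then `rmin` is continuous iff `f` is strictly 1-weakly convex; in that case `P_f(δ)` is a
singleton for every `δ` and `rmin` is surjective. -/
theorem prox_continuous_iff_strictWeaklyConvex (f : ℝ → ℝ) (rmin : ℝ → ℝ)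
    (hsel : ∀ δ : ℝ, ∀ r' : ℝ,
      (δ - rmin δ) ^ 2 / 2 + f (rmin δ) ≤ (δ - r') ^ 2 / 2 + f r') :
    (Continuous rmin ↔ StrictConvexOn ℝ Set.univ (fun r => f r + r ^ 2 / 2)) ∧
    (StrictConvexOn ℝ Set.univ (fun r => f r + r ^ 2 / 2) →
      (∀ δ : ℝ,
        {r : ℝ | ∀ r' : ℝ, (δ - r) ^ 2 / 2 + f r ≤ (δ - r') ^ 2 / 2 + f r'} = {rmin δ}) ∧
      Function.Surjective rmin) := by
  -- the key inequality: `rmin δ` minimizes `r ↦ (f r + r²/2) - δ r`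
  have key : ∀ δ r' : ℝ,
      f (rmin δ) + (rmin δ) ^ 2 / 2 - δ * rmin δ ≤ f r' + r' ^ 2 / 2 - δ * r' := by
    intro δ r'
    have h := hsel δ r'
    nlinarith [h]
  -- monotonicity of the selection
  have mono : Monotone rmin := by
    intro a b hab
    rcases eq_or_lt_of_le hab with h | h
    · rw [h]
    · by_contra hc
      push_neg at hc
      have h1 := key a (rmin b)
      have h2 := key b (rmin a)
      nlinarith
  -- `rmin 0` is a global minimum of `g`
  have cmin : ∀ r : ℝ, f (rmin 0) + (rmin 0) ^ 2 / 2 ≤ f r + r ^ 2 / 2 := by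
    intro r
    have := key 0 r
    nlinarith [this]
  -- range of rmin is unbounded above
  have ubig : ∀ z : ℝ, ∃ δ, z ≤ rmin δ := by
    intro z
    by_contra hc
    push_neg at hc
    have bound : ∀ δ : ℝ, 0 < δ → rmin δ < z →
        δ ≤ f (z + 1) + (z + 1) ^ 2 / 2 - (f (rmin 0) + (rmin 0) ^ 2 / 2) := by
      intro δ hpos hlt
      have h1 := key δ (z + 1)
      have h2 := cmin (rmin δ)
      nlinarith [mul_pos hpos (by linarith : (0:ℝ) < z - rmin δ)]
    have hδpos : (0 : ℝ) <
        max (f (z + 1) + (z + 1) ^ 2 / 2 - (f (rmin 0) + (rmin 0) ^ 2 / 2)) 0 + 1 := by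
      have := le_max_right (f (z + 1) + (z + 1) ^ 2 / 2 - (f (rmin 0) + (rmin 0) ^ 2 / 2)) 0
      linarith
    have h5 := bound _ hδpos (hc _)
    have h4 := le_max_left (f (z + 1) + (z + 1) ^ 2 / 2 - (f (rmin 0) + (rmin 0) ^ 2 / 2)) 0
    linarith
  -- range of rmin is unbounded below
  have ulow : ∀ z : ℝ, ∃ δ, rmin δ ≤ z := by
    intro z
    by_contra hc
    push_neg at hc
    have bound : ∀ δ : ℝ, δ < 0 → z < rmin δ →
        -δ ≤ f (z - 1) + (z - 1) ^ 2 / 2 - (f (rmin 0) + (rmin 0) ^ 2 / 2) := by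
      intro δ hneg hlt
      have h1 := key δ (z - 1)
      have h2 := cmin (rmin δ)
      nlinarith [mul_pos (by linarith : (0:ℝ) < -δ) (by linarith : (0:ℝ) < rmin δ - z)]
    have hδneg :
        -(max (f (z - 1) + (z - 1) ^ 2 / 2 - (f (rmin 0) + (rmin 0) ^ 2 / 2)) 0 + 1) < 0 := by
      have := le_max_right (f (z - 1) + (z - 1) ^ 2 / 2 - (f (rmin 0) + (rmin 0) ^ 2 / 2)) 0
      linarith
    have h5 := bound _ hδneg (hc _)
    have h4 := le_max_left (f (z - 1) + (z - 1) ^ 2 / 2 - (f (rmin 0) + (rmin 0) ^ 2 / 2)) 0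
    simp only [neg_neg] at h5
    linarith
  -- if `x` minimizes `r ↦ g r - δ r` and `δ' < δ` then `rmin δ' ≤ x`
  have left : ∀ δ δ' x : ℝ,
      (∀ r' : ℝ, f x + x ^ 2 / 2 - δ * x ≤ f r' + r' ^ 2 / 2 - δ * r') → δ' < δ →
      rmin δ' ≤ x := by
    intro δ δ' x hx h
    by_contra hcc
    push_neg at hcc
    have h1 := hx (rmin δ')
    have h2 := key δ' x
    nlinarith
  -- direction: continuity of rmin implies strict convexity of g
  have dir1 : Continuous rmin → StrictConvexOn ℝ Set.univ (fun r => f r + r ^ 2 / 2) := by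
    intro hcont
    have surj : ∀ z : ℝ, ∃ δ, rmin δ = z := by
      intro z
      obtain ⟨δ₂, h₂⟩ := ubig z
      obtain ⟨δ₁, h₁⟩ := ulow z
      rcases le_total δ₁ δ₂ with h | h
      · exact intermediate_value_univ δ₁ δ₂ hcont ⟨h₁, h₂⟩
      · exact ⟨δ₂, le_antisymm ((mono h).trans h₁) h₂⟩
    have main : ∀ x y a b : ℝ, x < y → 0 < a → 0 < b → a + b = 1 →
        f (a * x + b * y) + (a * x + b * y) ^ 2 / 2
          < a * (f x + x ^ 2 / 2) + b * (f y + y ^ 2 / 2) := by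
      intro x y a b hxy ha hb hab
      obtain ⟨δ, hδ⟩ := surj (a * x + b * y)
      set z : ℝ := a * x + b * y with hzdef
      have hx5 : (a + b) * x = x := by rw [hab]; ring
      have hxz : x < z := by
        rw [hzdef]
        nlinarith [mul_pos hb (sub_pos.2 hxy), hx5]
      have hx' : f z + z ^ 2 / 2 - δ * z ≤ f x + x ^ 2 / 2 - δ * x := by
        have := key δ x; rw [hδ] at this; exact this
      have hy' : f z + z ^ 2 / 2 - δ * z ≤ f y + y ^ 2 / 2 - δ * y := by
        have := key δ y; rw [hδ] at this; exact this
      by_contra hcon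
      push_neg at hcon
      -- then x is also a minimizer of g - δ·
      have h5 : (a + b) * (f z + z ^ 2 / 2 - δ * z) = f z + z ^ 2 / 2 - δ * z := by
        rw [hab]; ring
      have hδz : δ * z = δ * (a * x) + δ * (b * y) := by rw [hzdef]; ring
      have hxeq : f x + x ^ 2 / 2 - δ * x ≤ f z + z ^ 2 / 2 - δ * z := by
        nlinarith [mul_nonneg hb.le (by linarith :
          (0:ℝ) ≤ f y + y ^ 2 / 2 - δ * y - (f z + z ^ 2 / 2 - δ * z)), h5, hδz, hcon, ha, hb]
      have hxmin : ∀ r' : ℝ, f x + x ^ 2 / 2 - δ * x ≤ f r' + r' ^ 2 / 2 - δ * r' := by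
        intro r'
        have := key δ r'; rw [hδ] at this; linarith
      have htend : Tendsto rmin (nhdsWithin δ (Set.Iio δ)) (nhds z) := by
        rw [← hδ]
        exact (hcont.tendsto δ).mono_left nhdsWithin_le_nhds
      have hle : z ≤ x :=
        le_of_tendsto htend (Filter.eventually_of_mem self_mem_nhdsWithin
          fun δ' hδ' => left δ δ' x hxmin hδ')
      linarith
    refine ⟨convex_univ, ?_⟩
    intro x _ y _ hxy a b ha hb hab
    simp only [smul_eq_mul]
    rcases hxy.lt_or_gt with h | h
    · exact main x y a b h ha hb hab
    · have := main y x b a h hb ha (by linarith)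
      calc f (a * x + b * y) + (a * x + b * y) ^ 2 / 2
          = f (b * y + a * x) + (b * y + a * x) ^ 2 / 2 := by ring_nf
        _ < b * (f y + y ^ 2 / 2) + a * (f x + x ^ 2 / 2) := this
        _ = a * (f x + x ^ 2 / 2) + b * (f y + y ^ 2 / 2) := by ring
  -- singleton property under strict convexity
  have singl : StrictConvexOn ℝ Set.univ (fun r => f r + r ^ 2 / 2) →
      ∀ δ : ℝ,
        {r : ℝ | ∀ r' : ℝ, (δ - r) ^ 2 / 2 + f r ≤ (δ - r') ^ 2 / 2 + f r'} = {rmin δ} := by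
    intro hsc δ
    ext r
    simp only [Set.mem_setOf_eq, Set.mem_singleton_iff]
    constructor
    · intro hr
      by_contra hne
      have hstrict := hsc.2 (Set.mem_univ r) (Set.mem_univ (rmin δ)) hne
        (by norm_num : (0:ℝ) < 1/2) (by norm_num : (0:ℝ) < 1/2) (by norm_num)
      simp only [smul_eq_mul] at hstrict
      have h1 := hr ((1:ℝ)/2 * r + 1/2 * rmin δ)
      have h2 := hsel δ r
      have h3 := hr (rmin δ)
      nlinarith [hstrict, h1, h2, h3]
    · intro hr
      rw [hr]
      exact hsel δ
  -- subgradient existence for the convex function g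
  have subgrad : ConvexOn ℝ Set.univ (fun r => f r + r ^ 2 / 2) →
      ∀ z : ℝ, ∃ δ : ℝ, ∀ r : ℝ, f z + z ^ 2 / 2 + δ * (r - z) ≤ f r + r ^ 2 / 2 := by
    intro hconv z
    set S : Set ℝ :=
      (fun x => (f z + z ^ 2 / 2 - (f x + x ^ 2 / 2)) / (z - x)) '' Set.Iio z with hS
    have hne : S.Nonempty := ⟨_, ⟨z - 1, by simp, rfl⟩⟩
    have hbdd : BddAbove S := by
      refine ⟨(f (z + 1) + (z + 1) ^ 2 / 2 - (f z + z ^ 2 / 2)) / (z + 1 - z), ?_⟩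
      rintro s ⟨x, hx, rfl⟩
      have := hconv.slope_mono_adjacent (Set.mem_univ x) (Set.mem_univ (z + 1))
        (Set.mem_Iio.mp hx) (lt_add_one z)
      simpa using this
    refine ⟨sSup S, fun r => ?_⟩
    rcases lt_trichotomy r z with h | h | h
    · have hm : (f z + z ^ 2 / 2 - (f r + r ^ 2 / 2)) / (z - r) ≤ sSup S :=
        le_csSup hbdd ⟨r, Set.mem_Iio.mpr h, rfl⟩
      rw [div_le_iff₀ (by linarith : (0:ℝ) < z - r)] at hm
      nlinarith [hm]
    · rw [h]; simp
    · have hm : sSup S ≤ (f r + r ^ 2 / 2 - (f z + z ^ 2 / 2)) / (r - z) := by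
        apply csSup_le hne
        rintro s ⟨x, hx, rfl⟩
        have := hconv.slope_mono_adjacent (Set.mem_univ x) (Set.mem_univ r)
          (Set.mem_Iio.mp hx) h
        simpa using this
      rw [le_div_iff₀ (by linarith : (0:ℝ) < r - z)] at hm
      nlinarith [hm]
  -- surjectivity under strict convexity
  have surj2 : StrictConvexOn ℝ Set.univ (fun r => f r + r ^ 2 / 2) →
      Function.Surjective rmin := by
    intro hsc z
    obtain ⟨δ, hδ⟩ := subgrad hsc.convexOn z
    have hzmin : ∀ r' : ℝ, (δ - z) ^ 2 / 2 + f z ≤ (δ - r') ^ 2 / 2 + f r' := by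
      intro r'
      nlinarith [hδ r']
    have hz : z ∈ ({rmin δ} : Set ℝ) := by
      rw [← singl hsc δ]
      exact hzmin
    exact ⟨δ, (Set.mem_singleton_iff.mp hz).symm⟩
  exact ⟨⟨dir1, fun hsc => mono.continuous_of_surjective (surj2 hsc)⟩,
    fun hsc => ⟨singl hsc, surj2 hsc⟩⟩
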